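/- For every real x, the function g(t) = ln(Φ(t)) is twice differentiable at x and its second derivative satisfies g''(x) = (-x·φ(x)·Φ(x) - φ(x)²) / Φ(x)², and this quantity is strictly negative. -/

import Mathlib

open MeasureTheory Real Filter

/-- The standard normal cumulative distribution function
`Φ(x) = (√(2π))⁻¹ ∫_{-∞}^x exp(-t²/2) dt`. -/
noncomputable def stdNormalCDF (x : ℝ) : ℝ :=
  (Real.sqrt (2 * Real.pi))⁻¹ * ∫ t in Set.Iic x, Real.exp (-t ^ 2 / 2)

/-- The standard normal density `φ(x) = (√(2π))⁻¹ exp(-x²/2)`. -/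
noncomputable def stdNormalPDF (x : ℝ) : ℝ :=
  (Real.sqrt (2 * Real.pi))⁻¹ * Real.exp (-x ^ 2 / 2)

lemma sqrt2pi_inv_pos : 0 < (Real.sqrt (2 * Real.pi))⁻¹ :=
  inv_pos.mpr (Real.sqrt_pos.mpr (by positivity))

lemma gauss_integrable : Integrable (fun t : ℝ => Real.exp (-t ^ 2 / 2)) := by
  have : (fun t : ℝ => Real.exp (-t ^ 2 / 2)) = fun t => Real.exp (-(2⁻¹ : ℝ) * t ^ 2) := by
    funext t; ring_nf
  rw [this]
  exact integrable_exp_neg_mul_sq (by norm_num)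

lemma gauss_mul_integrable : Integrable (fun t : ℝ => t * Real.exp (-t ^ 2 / 2)) := by
  have : (fun t : ℝ => t * Real.exp (-t ^ 2 / 2)) =
      fun t => t * Real.exp (-(2⁻¹ : ℝ) * t ^ 2) := by
    funext t; ring_nf
  rw [this]
  exact integrable_mul_exp_neg_mul_sq (by norm_num)

lemma gauss_neg_mul_integrable : Integrable (fun t : ℝ => -t * Real.exp (-t ^ 2 / 2)) := by
  convert gauss_mul_integrable.neg using 1
  funext t
  simp [neg_mul]

lemma gauss_continuous : Continuous (fun t : ℝ => Real.exp (-t ^ 2 / 2)) := by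
  fun_prop

lemma pdf_pos (x : ℝ) : 0 < stdNormalPDF x :=
  mul_pos sqrt2pi_inv_pos (Real.exp_pos _)

lemma cdf_pos (x : ℝ) : 0 < stdNormalCDF x := by
  refine mul_pos sqrt2pi_inv_pos ?_
  rw [setIntegral_pos_iff_support_of_nonneg_ae
    (Filter.Eventually.of_forall fun t => (Real.exp_pos _).le) gauss_integrable.integrableOn]
  have hsupp : Function.support (fun t : ℝ => Real.exp (-t ^ 2 / 2)) = Set.univ := by
    ext t; simp [Function.mem_support, Real.exp_ne_zero]
  rw [hsupp, Set.univ_inter]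
  simp [Real.volume_Iic]

lemma inner_hasDerivAt (t : ℝ) : HasDerivAt (fun s : ℝ => -s ^ 2 / 2) (-t) t := by
  have h : HasDerivAt (fun s : ℝ => -s ^ 2 / 2) (-(2 * t ^ 1) / 2) t :=
    ((hasDerivAt_pow 2 t).neg).div_const 2
  convert h using 1
  simp; ring

lemma gauss_hasDerivAt (t : ℝ) :
    HasDerivAt (fun s : ℝ => Real.exp (-s ^ 2 / 2)) (-t * Real.exp (-t ^ 2 / 2)) t := by
  have h := (inner_hasDerivAt t).exp
  convert h using 1
  ring

lemma pdf_hasDerivAt (x : ℝ) : HasDerivAt stdNormalPDF (-x * stdNormalPDF x) x := by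
  have h := (gauss_hasDerivAt x).const_mul ((Real.sqrt (2 * Real.pi))⁻¹)
  unfold stdNormalPDF
  refine h.congr_deriv ?_
  ring

lemma cdf_hasDerivAt (x : ℝ) : HasDerivAt stdNormalCDF (stdNormalPDF x) x := by
  have key : stdNormalCDF = fun y =>
      (Real.sqrt (2 * Real.pi))⁻¹ * ((∫ t in Set.Iic (0 : ℝ), Real.exp (-t ^ 2 / 2)) +
        ∫ t in (0 : ℝ)..y, Real.exp (-t ^ 2 / 2)) := by
    funext y
    unfold stdNormalCDF
    congr 1
    have h := intervalIntegral.integral_Iic_sub_Iic (μ := volume) (f := fun t : ℝ => Real.exp (-t ^ 2 / 2))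
      (a := 0) (b := y) gauss_integrable.integrableOn gauss_integrable.integrableOn
    linarith
  have hd : HasDerivAt (fun y => ∫ t in (0 : ℝ)..y, Real.exp (-t ^ 2 / 2))
      (Real.exp (-x ^ 2 / 2)) x :=
    intervalIntegral.integral_hasDerivAt_right gauss_integrable.intervalIntegrable
      gauss_continuous.stronglyMeasurable.stronglyMeasurableAtFilter
      gauss_continuous.continuousAt
  have h := (hd.const_add (∫ t in Set.Iic (0 : ℝ), Real.exp (-t ^ 2 / 2))).const_mul
    ((Real.sqrt (2 * Real.pi))⁻¹)
  have h2 := h.congr_of_eventuallyEq (Filter.Eventually.of_forall fun y => congrFun key y)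
  unfold stdNormalPDF
  exact h2

lemma gauss_tendsto_atBot :
    Tendsto (fun t : ℝ => Real.exp (-t ^ 2 / 2)) atBot (nhds 0) := by
  have hneg : Tendsto (fun t : ℝ => -t) atBot atTop := tendsto_neg_atBot_atTop
  have hpow : Tendsto (fun s : ℝ => s ^ 2) atTop atTop := tendsto_pow_atTop two_ne_zero
  have hsq : Tendsto (fun t : ℝ => t ^ 2) atBot atTop := by
    have := hpow.comp hneg
    simpa [Function.comp_def, neg_sq] using this
  have h1 : Tendsto (fun t : ℝ => -t ^ 2 / 2) atBot atBot := by
    apply Tendsto.atBot_div_const (by norm_num : (0:ℝ) < 2)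
    exact tendsto_neg_atTop_atBot.comp hsq
  exact Real.tendsto_exp_atBot.comp h1

lemma gauss_ftc (x : ℝ) :
    ∫ t in Set.Iic x, -t * Real.exp (-t ^ 2 / 2) = Real.exp (-x ^ 2 / 2) := by
  have h := integral_Iic_of_hasDerivAt_of_tendsto' (a := x) (m := 0)
    (fun t _ => gauss_hasDerivAt t) gauss_neg_mul_integrable.integrableOn gauss_tendsto_atBot
  simpa using h

/-- The key inequality `φ(x) + x·Φ(x) > 0`. -/
lemma key_pos (x : ℝ) : 0 < stdNormalPDF x + x * stdNormalCDF x := by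
  rcases le_or_gt 0 x with hx | hx
  · exact add_pos_of_pos_of_nonneg (pdf_pos x) (mul_nonneg hx (cdf_pos x).le)
  · unfold stdNormalPDF stdNormalCDF
    have hc := sqrt2pi_inv_pos
    have hrw : (Real.sqrt (2 * Real.pi))⁻¹ * Real.exp (-x ^ 2 / 2) +
        x * ((Real.sqrt (2 * Real.pi))⁻¹ * ∫ t in Set.Iic x, Real.exp (-t ^ 2 / 2)) =
        (Real.sqrt (2 * Real.pi))⁻¹ * (Real.exp (-x ^ 2 / 2) +
          x * ∫ t in Set.Iic x, Real.exp (-t ^ 2 / 2)) := by ring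
    rw [hrw]
    refine mul_pos hc ?_
    have hsplit : ∫ t in Set.Iic x, (x - t) * Real.exp (-t ^ 2 / 2) =
        x * (∫ t in Set.Iic x, Real.exp (-t ^ 2 / 2)) + Real.exp (-x ^ 2 / 2) := by
      have heq : (fun t : ℝ => (x - t) * Real.exp (-t ^ 2 / 2)) =
          fun t => x * Real.exp (-t ^ 2 / 2) + -t * Real.exp (-t ^ 2 / 2) := by
        funext t; ring
      rw [heq, integral_add ((gauss_integrable.const_mul x).integrableOn)
            gauss_neg_mul_integrable.integrableOn, integral_const_mul, gauss_ftc]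
    have hpos : 0 < ∫ t in Set.Iic x, (x - t) * Real.exp (-t ^ 2 / 2) := by
      rw [setIntegral_pos_iff_support_of_nonneg_ae]
      · refine lt_of_lt_of_le ?_ (measure_mono (s := Set.Iio x) ?_)
        · simp [Real.volume_Iio]
        · intro t ht
          have ht' : t < x := ht
          refine ⟨?_, Set.mem_Iic.mpr ht'.le⟩
          simp only [Function.mem_support]
          exact mul_ne_zero (sub_ne_zero.mpr (ne_of_gt ht')) (Real.exp_ne_zero _)
      · filter_upwards [ae_restrict_mem measurableSet_Iic] with t ht
        exact mul_nonneg (sub_nonneg.mpr (Set.mem_Iic.mp ht)) (Real.exp_pos _).le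
      · have heq : (fun t : ℝ => (x - t) * Real.exp (-t ^ 2 / 2)) =
            fun t => x * Real.exp (-t ^ 2 / 2) + -t * Real.exp (-t ^ 2 / 2) := by
          funext t; ring
        rw [heq]
        exact ((gauss_integrable.const_mul x).add gauss_neg_mul_integrable).integrableOn
    rw [hsplit] at hpos
    linarith

/-- `ln ∘ Φ` is twice differentiable at every `x`, with second derivative
`(-x·φ(x)·Φ(x) - φ(x)²)/Φ(x)²`, which is strictly negative. -/
theorem log_stdNormalCDF_second_deriv (x : ℝ) :
    DifferentiableAt ℝ (fun t => Real.log (stdNormalCDF t)) x ∧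
    DifferentiableAt ℝ (deriv fun t => Real.log (stdNormalCDF t)) x ∧
    deriv (deriv fun t => Real.log (stdNormalCDF t)) x =
      (-x * stdNormalPDF x * stdNormalCDF x - stdNormalPDF x ^ 2) / stdNormalCDF x ^ 2 ∧
    (-x * stdNormalPDF x * stdNormalCDF x - stdNormalPDF x ^ 2) / stdNormalCDF x ^ 2 < 0 := by
  have hlog : ∀ y : ℝ, HasDerivAt (fun t => Real.log (stdNormalCDF t))
      (stdNormalPDF y / stdNormalCDF y) y :=
    fun y => (cdf_hasDerivAt y).log (cdf_pos y).ne'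
  have hderiv : (deriv fun t => Real.log (stdNormalCDF t)) =
      fun t => stdNormalPDF t / stdNormalCDF t :=
    funext fun t => (hlog t).deriv
  have h2 : HasDerivAt (fun t => stdNormalPDF t / stdNormalCDF t)
      ((-x * stdNormalPDF x * stdNormalCDF x - stdNormalPDF x ^ 2) / stdNormalCDF x ^ 2) x := by
    have h := (pdf_hasDerivAt x).div (cdf_hasDerivAt x) (cdf_pos x).ne'
    refine h.congr_deriv ?_
    ring
  refine ⟨(hlog x).differentiableAt, ?_, ?_, ?_⟩
  · rw [hderiv]; exact h2.differentiableAt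
  · rw [hderiv]; exact h2.deriv
  · have hnum : -x * stdNormalPDF x * stdNormalCDF x - stdNormalPDF x ^ 2 =
        -(stdNormalPDF x * (stdNormalPDF x + x * stdNormalCDF x)) := by ring
    rw [hnum]
    exact div_neg_of_neg_of_pos (neg_neg_of_pos (mul_pos (pdf_pos x) (key_pos x)))
      (pow_pos (cdf_pos x) 2)
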